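/- Let P be a two-orbit n-polytope in class 2_I with I = N \ {j} for some j ∈ N. Then P is i-face transitive for every i ≠ j, and Γ(P) has exactly two orbits on the j-faces of P, represented by the j-faces Φ_j and (Φ^j)_j of any pair of j-adjacent flags Φ, Φ^j. -/

import Mathlib

/-- An abstract polytope of rank `n`, presented by a partially ordered type of faces
with a strictly monotone rank function onto `{-1, 0, ..., n}`, such that every flag
(maximal chain) has exactly one face of each rank (`faceAt`), every flag has a unique
`i`-adjacent flag for each `i = 0, ..., n-1` (the diamond condition, via `adj`), and
which is strongly flag-connected. -/
structure AbstractPolytope (n : ℕ) (Face : Type*) [PartialOrder Face] where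
  rank : Face → ℤ
  rank_strictMono : ∀ {F G : Face}, F < G → rank F < rank G
  rank_le : ∀ F : Face, -1 ≤ rank F ∧ rank F ≤ (n : ℤ)
  /-- the unique face of rank `i` in the flag `Φ`, for `-1 ≤ i ≤ n` -/
  faceAt : Flag Face → ℤ → Face
  faceAt_mem : ∀ (Φ : Flag Face) (i : ℤ), -1 ≤ i → i ≤ (n : ℤ) → faceAt Φ i ∈ Φ
  faceAt_rank : ∀ (Φ : Flag Face) (i : ℤ), -1 ≤ i → i ≤ (n : ℤ) → rank (faceAt Φ i) = i
  faceAt_eq : ∀ (Φ : Flag Face) (F : Face), F ∈ Φ → faceAt Φ (rank F) = F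
  /-- the unique `i`-adjacent flag of `Φ`, for `0 ≤ i ≤ n-1` -/
  adj : Flag Face → ℕ → Flag Face
  adj_ne : ∀ (Φ : Flag Face) (i : ℕ), i < n → adj Φ i ≠ Φ
  adj_mem : ∀ (Φ : Flag Face) (i : ℕ), i < n →
    ∀ F ∈ Φ, rank F ≠ (i : ℤ) → F ∈ adj Φ i
  adj_unique : ∀ (Φ Ψ : Flag Face) (i : ℕ), i < n → Ψ ≠ Φ →
    (∀ F ∈ Φ, rank F ≠ (i : ℤ) → F ∈ Ψ) → Ψ = adj Φ i
  /-- strong flag-connectedness: any two flags are joined by a sequence of successively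
  adjacent flags, with all adjacencies at ranks not occurring among their common faces -/
  connected : ∀ Φ Ψ : Flag Face, ∃ (l : ℕ) (c : ℕ → Flag Face), c 0 = Φ ∧ c l = Ψ ∧
    ∀ m < l, ∃ i : ℕ, i < n ∧ c (m + 1) = adj (c m) i ∧
      ∀ F : Face, F ∈ Φ → F ∈ Ψ → rank F ≠ (i : ℤ)

namespace AbstractPolytope

variable {n : ℕ} {Face : Type*} [PartialOrder Face]

/-- The automorphism group `Γ(P)`: order automorphisms of the set of faces.
It acts on flags via `Flag.map`; `g • Φ` denotes the image flag. -/
instance : MulAction (Face ≃o Face) (Flag Face) where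
  smul g Φ := Flag.map g Φ
  one_smul Φ := by
    show Flag.map 1 Φ = Φ
    ext x
    simp [Flag.map, Flag.ofIsMaxChain]
  mul_smul g h Φ := by
    show Flag.map (g * h) Φ = Flag.map g (Flag.map h Φ)
    ext x
    simp [Flag.map, Flag.ofIsMaxChain, Set.image_image]

lemma smul_flag_def (g : Face ≃o Face) (Φ : Flag Face) : g • Φ = Flag.map g Φ := rfl

/-- Two flags lie in the same orbit under the automorphism group. -/
def SameOrbit (Φ Ψ : Flag Face) : Prop := ∃ g : Face ≃o Face, g • Φ = Ψ

/-- The polytope has exactly two orbits on flags. -/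
def TwoOrbit (_A : AbstractPolytope n Face) : Prop :=
  ∃ Φ Ψ : Flag Face, ¬ SameOrbit Φ Ψ ∧ ∀ X : Flag Face, SameOrbit X Φ ∨ SameOrbit X Ψ

/-- `I` is the class type set of the two-orbit polytope `A`: it consists precisely of
those ranks `i ∈ {0,...,n-1}` such that every flag and its `i`-adjacent flag lie in the
same orbit; that is, `A` is in the class `2_I`. -/
def InClass (A : AbstractPolytope n Face) (I : Set ℕ) : Prop :=
  (∀ i ∈ I, i < n) ∧ ∀ i : ℕ, i < n → (i ∈ I ↔ ∀ Φ : Flag Face, SameOrbit Φ (A.adj Φ i))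

/-- The stabilizer in the automorphism group of a face `F`. -/
def faceStab (_A : AbstractPolytope n Face) (F : Face) : Subgroup (Face ≃o Face) where
  carrier := {g : Face ≃o Face | g F = F}
  one_mem' := rfl
  mul_mem' := by
    intro a b ha hb
    show (a * b) F = F
    rw [RelIso.mul_apply]
    rw [show b F = F from hb, show a F = F from ha]
  inv_mem' := by
    intro a ha
    show a⁻¹ F = F
    conv_lhs => rw [← show a F = F from ha]
    exact a.symm_apply_apply F

lemma mem_faceStab {A : AbstractPolytope n Face} {F : Face} {g : Face ≃o Face} :
    g ∈ A.faceStab F ↔ g F = F := Iff.rfl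

end AbstractPolytope

section Aux

open AbstractPolytope

variable {n : ℕ} {Face : Type*} [PartialOrder Face]

lemma sameOrbit_refl (Φ : Flag Face) : SameOrbit Φ Φ := ⟨1, one_smul _ _⟩

lemma sameOrbit_symm {Φ Ψ : Flag Face} (h : SameOrbit Φ Ψ) : SameOrbit Ψ Φ := by
  obtain ⟨g, hg⟩ := h
  exact ⟨g⁻¹, by rw [← hg, inv_smul_smul]⟩

lemma sameOrbit_trans {Φ Ψ X : Flag Face} (h1 : SameOrbit Φ Ψ) (h2 : SameOrbit Ψ X) :
    SameOrbit Φ X := by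
  obtain ⟨g, hg⟩ := h1
  obtain ⟨h, hh⟩ := h2
  exact ⟨h * g, by rw [mul_smul, hg, hh]⟩

lemma exists_flag_mem (F : Face) : ∃ Φ : Flag Face, F ∈ Φ := by
  obtain ⟨M, hM, hFM⟩ := (IsChain.singleton (r := (· ≤ ·)) (a := F)).exists_maxChain
  exact ⟨Flag.ofIsMaxChain M hM, hFM rfl⟩

lemma mem_smul {g : Face ≃o Face} {Φ : Flag Face} {F : Face} (h : F ∈ Φ) :
    g F ∈ g • Φ := by
  rw [smul_flag_def, ← SetLike.mem_coe, Flag.coe_map]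
  exact ⟨F, h, rfl⟩

lemma mem_smul_iff {g : Face ≃o Face} {Φ : Flag Face} {F : Face} :
    F ∈ g • Φ ↔ g⁻¹ F ∈ Φ := by
  constructor
  · intro h
    have h2 := mem_smul (g := g⁻¹) h
    rwa [inv_smul_smul] at h2
  · intro h
    have h2 := mem_smul (g := g) h
    have : g (g⁻¹ F) = F := g.apply_symm_apply F
    rwa [this] at h2

lemma faceAt_lt (A : AbstractPolytope n Face) (Φ : Flag Face) {a b : ℤ}
    (h1 : -1 ≤ a) (h2 : a < b) (h3 : b ≤ (n : ℤ)) : A.faceAt Φ a < A.faceAt Φ b := by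
  have ha := A.faceAt_mem Φ a h1 (by omega)
  have hb := A.faceAt_mem Φ b (by omega) h3
  have hra := A.faceAt_rank Φ a h1 (by omega)
  have hrb := A.faceAt_rank Φ b (by omega) h3
  rcases Φ.le_or_le ha hb with h | h
  · rcases lt_or_eq_of_le h with h' | h'
    · exact h'
    · rw [h'] at hra; omega
  · rcases lt_or_eq_of_le h with h' | h'
    · have := A.rank_strictMono h'; omega
    · rw [h'] at hrb; omega

lemma int_fix {N : ℤ} (f : ℤ → ℤ)
    (hm : ∀ a b, -1 ≤ a → a < b → b ≤ N → f a < f b)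
    (hb : ∀ i, -1 ≤ i → i ≤ N → -1 ≤ f i ∧ f i ≤ N)
    {i : ℤ} (h1 : -1 ≤ i) (h2 : i ≤ N) : f i = i := by
  have key : ∀ a, -1 ≤ a → ∀ b, a ≤ b → b ≤ N → f a + (b - a) ≤ f b := by
    intro a ha b hab hbN
    refine Int.le_induction (motive := fun b _ => b ≤ N → f a + (b - a) ≤ f b) ?_ ?_ b hab hbN
    · intro _; omega
    · intro b hab ih hbN
      have hfb : f b < f (b + 1) := hm b (b + 1) (by omega) (by omega) (by omega)
      have := ih (by omega)
      omega
  have l1 := key (-1) le_rfl i (by omega) h2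
  have l2 := key i h1 N h2 le_rfl
  have b1 := hb (-1) le_rfl (by omega)
  have b2 := hb N (by omega) le_rfl
  have b3 := hb i h1 h2
  omega

lemma rank_smul (A : AbstractPolytope n Face) (g : Face ≃o Face) (F : Face) :
    A.rank (g F) = A.rank F := by
  obtain ⟨Φ, hF⟩ := exists_flag_mem F
  have key : ∀ i : ℤ, -1 ≤ i → i ≤ (n : ℤ) → A.rank (g (A.faceAt Φ i)) = i := by
    intro i h1 h2
    refine int_fix (fun i => A.rank (g (A.faceAt Φ i))) ?_ ?_ h1 h2
    · intro a b ha hab hbN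
      exact A.rank_strictMono (g.strictMono (faceAt_lt A Φ ha hab hbN))
    · intro i _ _
      exact A.rank_le _
  have h := key (A.rank F) (A.rank_le F).1 (A.rank_le F).2
  rwa [A.faceAt_eq Φ F hF] at h

lemma faceAt_smul (A : AbstractPolytope n Face) (g : Face ≃o Face) (Φ : Flag Face)
    {i : ℤ} (h1 : -1 ≤ i) (h2 : i ≤ (n : ℤ)) :
    g (A.faceAt Φ i) = A.faceAt (g • Φ) i := by
  have hmem : g (A.faceAt Φ i) ∈ g • Φ := mem_smul (A.faceAt_mem Φ i h1 h2)
  have h := A.faceAt_eq (g • Φ) _ hmem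
  rw [rank_smul, A.faceAt_rank Φ i h1 h2] at h
  exact h.symm

lemma adj_smul (A : AbstractPolytope n Face) (g : Face ≃o Face) (Φ : Flag Face)
    {i : ℕ} (hi : i < n) : g • A.adj Φ i = A.adj (g • Φ) i := by
  refine A.adj_unique _ _ i hi ?_ ?_
  · intro h
    exact A.adj_ne Φ i hi (smul_left_cancel g h)
  · intro F hF hrF
    rw [mem_smul_iff] at hF ⊢
    have hr : A.rank (g⁻¹ F) = A.rank F := rank_smul A g⁻¹ F
    exact A.adj_mem Φ i hi _ hF (by rw [hr]; exact hrF)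

lemma faceAt_adj_ne (A : AbstractPolytope n Face) (Φ : Flag Face) {i : ℤ} {j : ℕ}
    (hj : j < n) (h1 : -1 ≤ i) (h2 : i ≤ (n : ℤ)) (hij : i ≠ (j : ℤ)) :
    A.faceAt (A.adj Φ j) i = A.faceAt Φ i := by
  have hmem : A.faceAt Φ i ∈ A.adj Φ j :=
    A.adj_mem Φ j hj _ (A.faceAt_mem Φ i h1 h2)
      (by rw [A.faceAt_rank Φ i h1 h2]; exact hij)
  have h := A.faceAt_eq (A.adj Φ j) _ hmem
  rwa [A.faceAt_rank Φ i h1 h2] at h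

end Aux

open AbstractPolytope in
/-- A two-orbit polytope in class `2_{N \ {j}}` is `i`-face transitive for
every `i ≠ j`, and has exactly two orbits on `j`-faces, represented by the `j`-faces of
any pair of `j`-adjacent flags. -/
theorem stmt5 {n : ℕ} {Face : Type*} [PartialOrder Face] (A : AbstractPolytope n Face)
    (j : ℕ) (hj : j < n) (h2 : A.TwoOrbit)
    (hI : A.InClass {i : ℕ | i < n ∧ i ≠ j}) :
    (∀ i : ℕ, i < n → i ≠ j → ∀ F G : Face, A.rank F = (i : ℤ) → A.rank G = (i : ℤ) →
        ∃ g : Face ≃o Face, g F = G)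
    ∧ ∀ Φ : Flag Face,
        (∀ F : Face, A.rank F = (j : ℤ) →
          (∃ g : Face ≃o Face, g (A.faceAt Φ (j : ℤ)) = F) ∨
          (∃ g : Face ≃o Face, g (A.faceAt (A.adj Φ j) (j : ℤ)) = F))
        ∧ ¬ ∃ g : Face ≃o Face, g (A.faceAt Φ (j : ℤ)) = A.faceAt (A.adj Φ j) (j : ℤ) := by
  -- for every `i ∈ I`, every flag is in the same orbit as its `i`-adjacent flag
  have hIadj : ∀ i : ℕ, i < n → i ≠ j → ∀ Φ : Flag Face, SameOrbit Φ (A.adj Φ i) :=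
    fun i h hne Φ => ((hI.2 i h).1 ⟨h, hne⟩) Φ
  -- two flags sharing a face of rank `j` lie in the same orbit
  have chain_orbit : ∀ (Φ Ψ : Flag Face) (F : Face), F ∈ Φ → F ∈ Ψ →
      A.rank F = (j : ℤ) → SameOrbit Φ Ψ := by
    intro Φ Ψ F hFΦ hFΨ hrF
    obtain ⟨l, c, hc0, hcl, hstep⟩ := A.connected Φ Ψ
    suffices h : ∀ m, m ≤ l → SameOrbit Φ (c m) by rw [← hcl]; exact h l le_rfl
    intro m hm
    induction m with
    | zero => rw [hc0]; exact sameOrbit_refl _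
    | succ m ih =>
      obtain ⟨i, hin, hstep_eq, hrank⟩ := hstep m (by omega)
      have hij : i ≠ j := by
        intro h
        exact hrank F hFΦ hFΨ (by rw [hrF, h])
      rw [hstep_eq]
      exact sameOrbit_trans (ih (by omega)) (hIadj i hin hij (c m))
  -- no flag is in the same orbit as its `j`-adjacent flag
  have star : ∀ Φ : Flag Face, ¬ SameOrbit Φ (A.adj Φ j) := by
    intro Φ hΦ
    have prop : ∀ Ψ : Flag Face, SameOrbit Φ Ψ → SameOrbit Ψ (A.adj Ψ j) := by
      rintro Ψ ⟨g, hg⟩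
      obtain ⟨h0, hh0⟩ := hΦ
      refine ⟨g * h0 * g⁻¹, ?_⟩
      rw [mul_smul, mul_smul, ← hg, inv_smul_smul, hh0, adj_smul A g Φ hj, hg]
    have allsame : ∀ Ψ : Flag Face, SameOrbit Φ Ψ := by
      intro Ψ
      obtain ⟨l, c, hc0, hcl, hstep⟩ := A.connected Φ Ψ
      suffices h : ∀ m, m ≤ l → SameOrbit Φ (c m) by rw [← hcl]; exact h l le_rfl
      intro m hm
      induction m with
      | zero => rw [hc0]; exact sameOrbit_refl _
      | succ m ih =>
        obtain ⟨i, hin, hstep_eq, _⟩ := hstep m (by omega)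
        have hcm := ih (by omega)
        rw [hstep_eq]
        by_cases hij : i = j
        · subst hij
          exact sameOrbit_trans hcm (prop (c m) hcm)
        · exact sameOrbit_trans hcm (hIadj i hin hij (c m))
    obtain ⟨Φ₀, Ψ₀, hne, _⟩ := h2
    exact hne (sameOrbit_trans (sameOrbit_symm (allsame Φ₀)) (allsame Ψ₀))
  -- in a two-orbit polytope, two flags each not in the orbit of a third are in the same orbit
  have two_cover : ∀ X Y Z : Flag Face, ¬ SameOrbit X Y → ¬ SameOrbit Z Y →
      SameOrbit X Z := by
    obtain ⟨Φ₀, Ψ₀, _, hcov⟩ := h2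
    intro X Y Z hXY hZY
    rcases hcov X with hX | hX <;> rcases hcov Y with hY | hY <;> rcases hcov Z with hZ | hZ <;>
      first
        | exact sameOrbit_trans hX (sameOrbit_symm hZ)
        | exact absurd (sameOrbit_trans hX (sameOrbit_symm hY)) hXY
        | exact absurd (sameOrbit_trans hZ (sameOrbit_symm hY)) hZY
  -- every flag is in the orbit of `Ψ` or of `adj Ψ j`
  have starstar : ∀ Φ Ψ : Flag Face, SameOrbit Φ Ψ ∨ SameOrbit Φ (A.adj Ψ j) := by
    intro Φ Ψ
    by_cases h : SameOrbit Φ Ψ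
    · exact Or.inl h
    · exact Or.inr (two_cover Φ Ψ (A.adj Ψ j) h
        (fun hc => star Ψ (sameOrbit_symm hc)))
  constructor
  · -- i-face transitivity for i ≠ j
    intro i hi hij F G hF hG
    obtain ⟨Φ, hΦ⟩ := exists_flag_mem F
    obtain ⟨Ψ, hΨ⟩ := exists_flag_mem G
    have h1 : (-1 : ℤ) ≤ (i : ℤ) := by omega
    have h2' : (i : ℤ) ≤ (n : ℤ) := by omega
    have hFΦ : A.faceAt Φ (i : ℤ) = F := by rw [← hF]; exact A.faceAt_eq Φ F hΦ
    have hGΨ : A.faceAt Ψ (i : ℤ) = G := by rw [← hG]; exact A.faceAt_eq Ψ G hΨ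
    rcases starstar Φ Ψ with ⟨g, hg⟩ | ⟨g, hg⟩
    · exact ⟨g, by rw [← hFΦ, faceAt_smul A g Φ h1 h2', hg, hGΨ]⟩
    · refine ⟨g, ?_⟩
      rw [← hFΦ, faceAt_smul A g Φ h1 h2', hg,
        faceAt_adj_ne A Ψ hj h1 h2' (by exact_mod_cast hij), hGΨ]
  · intro Φ
    have h1 : (-1 : ℤ) ≤ (j : ℤ) := by omega
    have h2' : (j : ℤ) ≤ (n : ℤ) := by omega
    constructor
    · -- two orbits of j-faces, represented by faceAt Φ j and faceAt (adj Φ j) j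
      intro F hF
      obtain ⟨Ψ, hΨ⟩ := exists_flag_mem F
      have hFΨ : A.faceAt Ψ (j : ℤ) = F := by rw [← hF]; exact A.faceAt_eq Ψ F hΨ
      rcases starstar Ψ Φ with hc | hc
      · obtain ⟨g, hg⟩ := sameOrbit_symm hc
        exact Or.inl ⟨g, by rw [faceAt_smul A g Φ h1 h2', hg, hFΨ]⟩
      · obtain ⟨g, hg⟩ := sameOrbit_symm hc
        exact Or.inr ⟨g, by rw [faceAt_smul A g _ h1 h2', hg, hFΨ]⟩
    · -- the two representatives are not in the same face orbit
      rintro ⟨g, hg⟩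
      set Ψ := g • Φ with hΨdef
      have hface : A.faceAt Ψ (j : ℤ) = A.faceAt (A.adj Φ j) (j : ℤ) := by
        rw [← faceAt_smul A g Φ h1 h2', hg]
      have hmem1 : A.faceAt (A.adj Φ j) (j : ℤ) ∈ Ψ := by
        rw [← hface]; exact A.faceAt_mem Ψ _ h1 h2'
      have hmem2 : A.faceAt (A.adj Φ j) (j : ℤ) ∈ A.adj Φ j :=
        A.faceAt_mem _ _ h1 h2'
      have hr : A.rank (A.faceAt (A.adj Φ j) (j : ℤ)) = (j : ℤ) :=
        A.faceAt_rank _ _ h1 h2'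
      have hΨadj : SameOrbit Ψ (A.adj Φ j) := chain_orbit Ψ (A.adj Φ j) _ hmem1 hmem2 hr
      exact star Φ (sameOrbit_trans ⟨g, rfl⟩ hΨadj)
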